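/- arXiv:math/9203203 — 2 statements merged into one kernel-verified Lean document; each statement's English description precedes it below -/
import Mathlib

section
/- Let h : ℝ → ℝ be a homeomorphism and define S : ℝ × ℝ → ℝ by S(t,y) = h(h⁻¹(y) + t). If the partial derivative ∂S/∂y exists everywhere and is continuous as a function of (t,y), then h is a C¹ diffeomorphism of ℝ. -/
open Set MeasureTheory Filter

theorem translation_conjugacy_rigidity
    (h : Homeomorph ℝ ℝ) (S S' : ℝ × ℝ → ℝ)
    (hS : ∀ t y, S (t, y) = h (h.symm y + t))
    (hderiv : ∀ t y, HasDerivAt (fun y' => S (t, y')) (S' (t, y)) y)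
    (hcont : Continuous S') :
    ContDiff ℝ 1 (h : ℝ → ℝ) ∧ (∀ x, deriv (h : ℝ → ℝ) x ≠ 0) ∧
      Differentiable ℝ (h.symm : ℝ → ℝ) := by
  -- S is continuous
  have hSc : Continuous S := by
    have hSeq : S = fun p : ℝ × ℝ => h (h.symm p.2 + p.1) := by
      funext p
      exact hS p.1 p.2
    rw [hSeq]; fun_prop
  -- S' (0, y) = 1
  have hS0 : ∀ y : ℝ, S' (0, y) = 1 := by
    intro y
    have h1 : HasDerivAt (fun y' => S (0, y')) (S' (0, y)) y := hderiv 0 y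
    have h2 : (fun y' : ℝ => S (0, y')) = id := by
      funext y'; rw [hS]; simp
    rw [h2] at h1
    exact h1.unique (hasDerivAt_id y)
  -- S' never vanishes (cocycle identity)
  have hSne : ∀ p : ℝ × ℝ, S' p ≠ 0 := by
    rintro ⟨t, y⟩ h0
    have hd2 : HasDerivAt ((fun y' => S (-t, y')) ∘ fun y' => S (t, y'))
        (S' (-t, S (t, y)) * S' (t, y)) y :=
      (hderiv (-t) (S (t, y))).comp y (hderiv t y)
    have he : ((fun y' => S (-t, y')) ∘ fun y' => S (t, y')) = id := by
      funext y'
      show S (-t, S (t, y')) = y'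
      rw [hS, hS]; simp
    rw [he] at hd2
    have huniq := hd2.unique (hasDerivAt_id y)
    rw [h0, mul_zero] at huniq
    exact one_ne_zero huniq.symm
  -- S' is everywhere positive
  have hSpos : ∀ p : ℝ × ℝ, 0 < S' p := by
    intro p
    by_contra hle
    push_neg at hle
    have hmem : (0 : ℝ) ∈ Set.Icc (S' p) (S' (0, 0)) := ⟨hle, by rw [hS0 0]; norm_num⟩
    obtain ⟨q, hq⟩ := intermediate_value_univ p (0, 0) hcont hmem
    exact hSne q hq
  -- interval integrability of h
  have hInt : ∀ a b : ℝ, IntervalIntegrable (h : ℝ → ℝ) volume a b := fun a b =>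
    h.continuous.intervalIntegrable a b
  -- the averaged function H
  set fH : ℝ → ℝ := fun x => ∫ u in x..(x + 1), (h : ℝ → ℝ) u with hfH
  have hHderiv : ∀ x : ℝ, HasDerivAt fH ((h (x + 1) : ℝ) - h x) x := by
    intro x
    have hA : ∀ r : ℝ, HasDerivAt (fun s => ∫ u in (0:ℝ)..s, (h : ℝ → ℝ) u) ((h r : ℝ)) r := by
      intro r
      exact intervalIntegral.integral_hasDerivAt_right (hInt 0 r)
        (h.continuous.stronglyMeasurable.stronglyMeasurableAtFilter)
        h.continuous.continuousAt
    have h1 : HasDerivAt (fun s : ℝ => ∫ u in (0:ℝ)..(s + 1), (h : ℝ → ℝ) u)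
        ((h (x + 1) : ℝ)) x := by
      have := (hA (x + 1)).comp x ((hasDerivAt_id x).add_const 1)
      simpa [Function.comp_def] using this
    have h2 := h1.sub (hA x)
    have heq : fH = fun s : ℝ =>
        (∫ u in (0:ℝ)..(s + 1), (h : ℝ → ℝ) u) - ∫ u in (0:ℝ)..s, (h : ℝ → ℝ) u := by
      funext s
      rw [hfH]
      exact (intervalIntegral.integral_interval_sub_left (hInt 0 (s + 1)) (hInt 0 s)).symm
    rw [heq]
    exact h2
  have hHdiff : Differentiable ℝ fH := fun x => (hHderiv x).differentiableAt
  have hHcont : Continuous fH := hHdiff.continuous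
  have hHne : ∀ x : ℝ, (h (x + 1) : ℝ) - h x ≠ 0 := by
    intro x
    refine sub_ne_zero.mpr fun hh => ?_
    have : (x : ℝ) + 1 = x := h.injective hh
    linarith
  -- the functions G and g
  set G : ℝ → ℝ := fun y => ∫ t in (0:ℝ)..1, S (t, y) with hGdef
  set g : ℝ → ℝ := fun y => ∫ t in (0:ℝ)..1, S' (t, y) with hgdef
  have hScy : ∀ y : ℝ, Continuous fun t => S (t, y) := fun y => hSc.comp (by fun_prop)
  have hScx : ∀ t : ℝ, Continuous fun y => S (t, y) := fun t => hSc.comp (by fun_prop)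
  have hS'cy : ∀ y : ℝ, Continuous fun t => S' (t, y) := fun y => hcont.comp (by fun_prop)
  have hGH : ∀ x : ℝ, G (h x) = fH x := by
    intro x
    have heq : (fun t => S (t, h x)) = fun t => (h : ℝ → ℝ) (x + t) := by
      funext t; rw [hS]; simp
    calc G (h x) = ∫ t in (0:ℝ)..1, (h : ℝ → ℝ) (x + t) := by
          show (∫ t in (0:ℝ)..1, S (t, h x)) = _
          rw [heq]
      _ = ∫ u in (x + 0)..(x + 1), (h : ℝ → ℝ) u :=
          intervalIntegral.integral_comp_add_left _ x
      _ = fH x := by rw [add_zero]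
  -- derivative of G
  have hGderiv : ∀ y : ℝ, HasDerivAt G (g y) y := by
    intro y₀
    obtain ⟨C, hC⟩ : ∃ C, ∀ p ∈ (Set.Icc (0:ℝ) 1 ×ˢ Set.Icc (y₀ - 1) (y₀ + 1)), ‖S' p‖ ≤ C :=
      (isCompact_Icc.prod isCompact_Icc).exists_bound_of_continuousOn hcont.continuousOn
    have key := intervalIntegral.hasDerivAt_integral_of_dominated_loc_of_deriv_le
      (F := fun y t => S (t, y)) (F' := fun y t => S' (t, y)) (x₀ := y₀) (a := (0:ℝ)) (b := 1)
      (bound := fun _ => C) (μ := volume) (Metric.ball_mem_nhds y₀ zero_lt_one)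
      (Filter.Eventually.of_forall fun y => (hScy y).aestronglyMeasurable)
      ((hScy y₀).intervalIntegrable 0 1)
      (hS'cy y₀).aestronglyMeasurable
      ?_ (continuous_const.intervalIntegrable 0 1) ?_
    · exact key.2
    · refine Filter.Eventually.of_forall fun t ht x hx => ?_
      refine hC (t, x) ⟨?_, ?_⟩
      · rw [Set.uIoc_of_le (by norm_num : (0:ℝ) ≤ 1)] at ht
        exact ⟨le_of_lt ht.1, ht.2⟩
      · rw [Metric.mem_ball, Real.dist_eq] at hx
        have := abs_lt.mp hx
        constructor <;> [linarith [this.1]; linarith [this.2]]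
    · exact Filter.Eventually.of_forall fun t _ x _ => hderiv t x
  have hgpos : ∀ y : ℝ, 0 < g y := fun y =>
    intervalIntegral.intervalIntegral_pos_of_pos ((hS'cy y).intervalIntegrable 0 1)
      (fun t => hSpos (t, y)) zero_lt_one
  have hgcont : Continuous g := by
    apply intervalIntegral.continuous_parametric_intervalIntegral_of_continuous'
      (f := fun (y : ℝ) (t : ℝ) => S' (t, y)) (μ := volume) ?_ 0 1
    show Continuous fun p : ℝ × ℝ => S' (p.2, p.1)
    exact hcont.comp continuous_swap
  -- fH is a homeomorphism of ℝ
  obtain ⟨e, he⟩ : ∃ e : Homeomorph ℝ ℝ, ⇑e = fH := by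
    rcases h.continuous.strictMono_of_inj h.injective with hmono | hanti
    · -- h increasing: fH strictly monotone and surjective
      have hmonoH : StrictMono fH := by
        intro x y hxy
        have hc : 0 < y - x := by linarith
        have heq : fH y = ∫ u in x..(x + 1), (h : ℝ → ℝ) (u + (y - x)) := by
          show (∫ u in y..(y + 1), (h : ℝ → ℝ) u) = _
          rw [intervalIntegral.integral_comp_add_right ((h : ℝ → ℝ)) (y - x)]
          congr 1 <;> ring
        have hci : Continuous fun u : ℝ => (h : ℝ → ℝ) (u + (y - x)) := by fun_prop
        have hdiff : fH y - fH x
            = ∫ u in x..(x + 1), ((h : ℝ → ℝ) (u + (y - x)) - (h : ℝ → ℝ) u) := by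
          rw [heq, intervalIntegral.integral_sub (hci.intervalIntegrable x (x + 1))
            (hInt x (x + 1))]
        have hpos : 0 < fH y - fH x := by
          rw [hdiff]
          exact intervalIntegral.intervalIntegral_pos_of_pos
            ((hci.sub h.continuous).intervalIntegrable x (x + 1))
            (fun u => sub_pos.mpr (hmono (by linarith : u < u + (y - x)))) (by linarith)
        linarith
      have hub : ∀ x : ℝ, fH x ≤ (h (x + 1) : ℝ) := by
        intro x
        have := intervalIntegral.integral_mono_on (μ := volume)
          (by linarith : x ≤ x + 1) (hInt x (x + 1))
          (continuous_const.intervalIntegrable _ _)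
          (fun u hu => hmono.monotone hu.2)
        simpa using this
      have hlb : ∀ x : ℝ, (h x : ℝ) ≤ fH x := by
        intro x
        have := intervalIntegral.integral_mono_on (μ := volume)
          (by linarith : x ≤ x + 1)
          (continuous_const.intervalIntegrable _ _) (hInt x (x + 1))
          (fun u hu => hmono.monotone hu.1)
        simpa using this
      have hsurj : Function.Surjective fH := by
        intro z
        obtain ⟨a, ha⟩ := h.surjective z
        have h2 : fH (a - 1) ≤ z := by
          have := hub (a - 1)
          rw [show a - 1 + 1 = a by ring, ha] at this
          exact this
        have h3 : z ≤ fH a := ha ▸ hlb a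
        obtain ⟨x, _, hx⟩ := intermediate_value_Icc (by linarith : a - 1 ≤ a)
          hHcont.continuousOn ⟨h2, h3⟩
        exact ⟨x, hx⟩
      exact ⟨(hmonoH.orderIsoOfSurjective fH hsurj).toHomeomorph, rfl⟩
    · -- h decreasing: fH strictly antitone and surjective
      have hantiH : StrictAnti fH := by
        intro x y hxy
        have hc : 0 < y - x := by linarith
        have heq : fH y = ∫ u in x..(x + 1), (h : ℝ → ℝ) (u + (y - x)) := by
          show (∫ u in y..(y + 1), (h : ℝ → ℝ) u) = _
          rw [intervalIntegral.integral_comp_add_right ((h : ℝ → ℝ)) (y - x)]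
          congr 1 <;> ring
        have hci : Continuous fun u : ℝ => (h : ℝ → ℝ) (u + (y - x)) := by fun_prop
        have hdiff : fH x - fH y
            = ∫ u in x..(x + 1), ((h : ℝ → ℝ) u - (h : ℝ → ℝ) (u + (y - x))) := by
          rw [heq, intervalIntegral.integral_sub (hInt x (x + 1))
            (hci.intervalIntegrable x (x + 1))]
        have hpos : 0 < fH x - fH y := by
          rw [hdiff]
          exact intervalIntegral.intervalIntegral_pos_of_pos
            ((h.continuous.sub hci).intervalIntegrable x (x + 1))
            (fun u => sub_pos.mpr (hanti (by linarith : u < u + (y - x)))) (by linarith)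
        linarith
      have hub : ∀ x : ℝ, fH x ≤ (h x : ℝ) := by
        intro x
        have := intervalIntegral.integral_mono_on (μ := volume)
          (by linarith : x ≤ x + 1) (hInt x (x + 1))
          (continuous_const.intervalIntegrable _ _)
          (fun u hu => hanti.antitone hu.1)
        simpa using this
      have hlb : ∀ x : ℝ, (h (x + 1) : ℝ) ≤ fH x := by
        intro x
        have := intervalIntegral.integral_mono_on (μ := volume)
          (by linarith : x ≤ x + 1)
          (continuous_const.intervalIntegrable _ _) (hInt x (x + 1))
          (fun u hu => hanti.antitone hu.2)
        simpa using this
      have hsurj : Function.Surjective fH := by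
        intro z
        obtain ⟨a, ha⟩ := h.surjective z
        have h2 : fH a ≤ z := ha ▸ hub a
        have h3 : z ≤ fH (a - 1) := by
          have := hlb (a - 1)
          rw [show a - 1 + 1 = a by ring, ha] at this
          exact this
        obtain ⟨x, _, hx⟩ := intermediate_value_Icc' (by linarith : a - 1 ≤ a)
          hHcont.continuousOn ⟨h2, h3⟩
        exact ⟨x, hx⟩
      -- build homeomorphism from the strictly antitone surjection
      have hmonoN : StrictMono (fun x => fH (-x)) := fun x y hxy =>
        hantiH (by linarith : -y < -x)
      have hsurjN : Function.Surjective (fun x => fH (-x)) := fun z => by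
        obtain ⟨x, hx⟩ := hsurj z
        exact ⟨-x, by simpa using hx⟩
      refine ⟨(Homeomorph.neg ℝ).trans
        (hmonoN.orderIsoOfSurjective (fun x => fH (-x)) hsurjN).toHomeomorph, ?_⟩
      funext x
      show (hmonoN.orderIsoOfSurjective _ hsurjN) (-x) = fH x
      show fH (-(-x)) = fH x
      rw [neg_neg]
  -- derivative of e.symm
  have hEsymm : ∀ z : ℝ, HasDerivAt (⇑e.symm)
      (((h (e.symm z + 1) : ℝ) - h (e.symm z))⁻¹) z := by
    intro z
    refine HasDerivAt.of_local_left_inverse (e.symm.continuous.continuousAt)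
      (f := fH) ?_ (hHne (e.symm z))
      (Filter.Eventually.of_forall fun y => by rw [← he]; exact e.apply_symm_apply y)
    exact hHderiv (e.symm z)
  -- h.symm = e.symm ∘ G
  have hsymm_eq : ∀ y : ℝ, (h.symm : ℝ → ℝ) y = e.symm (G y) := by
    intro y
    have h1 : e (h.symm y) = G y := by
      rw [he]
      rw [← hGH (h.symm y), h.apply_symm_apply]
    have := congrArg (⇑e.symm) h1
    rw [e.symm_apply_apply] at this
    exact this
  -- derivative of h.symm
  have hsymmDeriv : ∀ y : ℝ, HasDerivAt (h.symm : ℝ → ℝ)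
      (((h ((h.symm y) + 1) : ℝ) - h (h.symm y))⁻¹ * g y) y := by
    intro y
    have hcomp := (hEsymm (G y)).comp y (hGderiv y)
    have hfun : (⇑e.symm ∘ G) = (h.symm : ℝ → ℝ) := funext fun y' => (hsymm_eq y').symm
    rw [hfun, ← hsymm_eq y] at hcomp
    exact hcomp
  have hDne : ∀ y : ℝ, ((h ((h.symm y) + 1) : ℝ) - h (h.symm y))⁻¹ * g y ≠ 0 := fun y =>
    mul_ne_zero (inv_ne_zero (hHne _)) (ne_of_gt (hgpos y))
  -- derivative of h
  have hDeriv : ∀ x : ℝ, HasDerivAt (h : ℝ → ℝ)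
      ((((h (x + 1) : ℝ) - h x)⁻¹ * g (h x))⁻¹) x := by
    intro x
    have hd := HasDerivAt.of_local_left_inverse (h.continuous.continuousAt)
      (hsymmDeriv (h x)) (hDne (h x))
      (Filter.Eventually.of_forall fun y => h.symm_apply_apply y)
    simpa [h.symm_apply_apply] using hd
  have hdiff_h : Differentiable ℝ (h : ℝ → ℝ) := fun x => (hDeriv x).differentiableAt
  have hderiv_formula : deriv (h : ℝ → ℝ)
      = fun x => ((h (x + 1) : ℝ) - h x) * (g ((h : ℝ → ℝ) x))⁻¹ := by
    funext x
    rw [(hDeriv x).deriv, mul_inv, inv_inv]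
  refine ⟨?_, ?_, fun y => (hsymmDeriv y).differentiableAt⟩
  · rw [contDiff_one_iff_deriv]
    refine ⟨hdiff_h, ?_⟩
    rw [hderiv_formula]
    have hc1 : Continuous fun x : ℝ => (h (x + 1) : ℝ) - h x := by fun_prop
    have hc2 : Continuous fun x : ℝ => (g ((h : ℝ → ℝ) x))⁻¹ :=
      (hgcont.comp h.continuous).inv₀ fun x => ne_of_gt (hgpos _)
    exact hc1.mul hc2
  · intro x
    rw [hderiv_formula]
    exact mul_ne_zero (hHne x) (inv_ne_zero (ne_of_gt (hgpos _)))
end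

section
/- Let A ∈ SL(2,ℤ) be hyperbolic with unstable eigenvector vᵘ and stable eigenvector vˢ. For z ∈ ℝ²/ℤ², define the stable leaf Wˢ(z) = {z + π(s·vˢ) : s ∈ ℝ} and unstable leaf Wᵘ(z) = {z + π(s·vᵘ) : s ∈ ℝ}, where π : ℝ² → ℝ²/ℤ² is the projection. Then for every z, the homoclinic set Wˢ(z) ∩ Wᵘ(z) is dense in ℝ²/ℤ². -/
/-- The coordinatewise cast `(Fin 2 → ℤ) →+ (Fin 2 → ℝ)`. -/
def intCast2 : (Fin 2 → ℤ) →+ (Fin 2 → ℝ) where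
  toFun w := fun i => (w i : ℝ)
  map_zero' := by funext i; simp
  map_add' x y := by funext i; push_cast; simp

/-- The integer lattice `ℤ² ⊂ ℝ²`. -/
def lattice2 : AddSubgroup (Fin 2 → ℝ) := intCast2.range

/-- The torus `T² = ℝ²/ℤ²`. -/
abbrev Torus2 : Type := (Fin 2 → ℝ) ⧸ lattice2

/-- The projection `π : ℝ² → ℝ²/ℤ²`. -/
abbrev torusProj : (Fin 2 → ℝ) → Torus2 := QuotientAddGroup.mk

theorem homoclinic_points_dense
    (A : Matrix (Fin 2) (Fin 2) ℤ) (hdet : A.det = 1)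
    (htr : 2 < |A.trace|) (l : ℝ) (hl : 1 < |l|)
    (vs vu : Fin 2 → ℝ) (hvs : vs ≠ 0) (hvu : vu ≠ 0)
    (heigs : (A.map (Int.cast : ℤ → ℝ)).mulVec vs = l⁻¹ • vs)
    (heigu : (A.map (Int.cast : ℤ → ℝ)).mulVec vu = l • vu) :
    ∀ z : Torus2,
      Dense ({w : Torus2 | ∃ s : ℝ, w = z + torusProj (s • vs)} ∩
             {w : Torus2 | ∃ s : ℝ, w = z + torusProj (s • vu)}) := by
  intro z
  have hl0 : l ≠ 0 := by
    intro h; rw [h] at hl; simp at hl; linarith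
  -- the eigenvectors are linearly independent
  have hDne : vs 0 * vu 1 - vs 1 * vu 0 ≠ 0 := by
    intro hD
    have hpar : ∃ c : ℝ, vu = c • vs := by
      have h01 : vs 0 ≠ 0 ∨ vs 1 ≠ 0 := by
        by_contra h; push_neg at h
        exact hvs (funext fun i => by fin_cases i <;> simp [h.1, h.2])
      rcases h01 with h0 | h1
      · refine ⟨vu 0 / vs 0, funext fun i => ?_⟩
        fin_cases i <;> simp only [Pi.smul_apply, smul_eq_mul, Fin.zero_eta, Fin.mk_one]
        · field_simp
        · field_simp; linear_combination hD
      · refine ⟨vu 1 / vs 1, funext fun i => ?_⟩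
        fin_cases i <;> simp only [Pi.smul_apply, smul_eq_mul, Fin.zero_eta, Fin.mk_one]
        · field_simp; linear_combination -hD
        · field_simp
    obtain ⟨c, hc⟩ := hpar
    have hc0 : c ≠ 0 := by
      intro h; rw [h, zero_smul] at hc; exact hvu hc
    rw [hc, Matrix.mulVec_smul, heigs, smul_smul, smul_smul] at heigu
    have hcoef : c * l⁻¹ = l * c := by
      by_contra hne
      have h2 := sub_eq_zero.mpr heigu
      rw [← sub_smul] at h2
      rcases smul_eq_zero.mp h2 with h | h
      · exact hne (sub_eq_zero.mp h)
      · exact hvs h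
    have h2' : c = l * l * c := by
      have h3 : c * l⁻¹ * l = l * c * l := by rw [hcoef]
      rw [mul_assoc, inv_mul_cancel₀ hl0, mul_one] at h3
      linarith [h3]
    have hll : l * l = 1 := by
      have h3 : (l * l - 1) * c = 0 := by linear_combination -h2'
      rcases mul_eq_zero.mp h3 with h | h
      · linarith
      · exact absurd h hc0
    have habs : |l| * |l| = 1 := by rw [← abs_mul, hll, abs_one]
    nlinarith [habs]
  -- coordinates with respect to the eigenbasis
  set al : (Fin 2 → ℝ) → ℝ :=
    fun x => (x 0 * vu 1 - x 1 * vu 0) / (vs 0 * vu 1 - vs 1 * vu 0) with hal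
  set be : (Fin 2 → ℝ) → ℝ :=
    fun x => (vs 0 * x 1 - vs 1 * x 0) / (vs 0 * vu 1 - vs 1 * vu 0) with hbe
  have hcoord : ∀ a b : ℝ, al (a • vs + b • vu) = a ∧ be (a • vs + b • vu) = b := by
    intro a b
    constructor <;>
      · simp only [hal, hbe, Pi.add_apply, Pi.smul_apply, smul_eq_mul]
        rw [div_eq_iff hDne]
        ring
  have hdecomp : ∀ x : Fin 2 → ℝ, x = al x • vs + be x • vu := by
    intro x; funext i; fin_cases i <;>
      · simp only [hal, hbe, Pi.add_apply, Pi.smul_apply, smul_eq_mul, Fin.zero_eta, Fin.mk_one]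
        rw [div_mul_eq_mul_div, div_mul_eq_mul_div, ← add_div, eq_div_iff hDne]
        ring
  have hzs : ∀ (k : ℤ) (x : Fin 2 → ℝ), al (k • x) = k * al x ∧ be (k • x) = k * be x := by
    intro k x
    constructor <;>
      · simp only [hal, hbe, Pi.smul_apply, zsmul_eq_mul, Pi.mul_apply, Pi.intCast_apply]
        ring
  have hiC : ∀ (n : Fin 2 → ℤ) (i : Fin 2), intCast2 n i = (n i : ℝ) := fun n i => rfl
  have hcast : ∀ (M : Matrix (Fin 2) (Fin 2) ℤ) (n : Fin 2 → ℤ),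
      intCast2 (M.mulVec n) = (M.map (Int.cast : ℤ → ℝ)).mulVec (intCast2 n) := by
    intro M n; funext i
    fin_cases i <;> simp [intCast2, Matrix.mulVec, dotProduct, Fin.sum_univ_two, Matrix.map_apply]
  have halA : ∀ x : Fin 2 → ℝ,
      al ((A.map (Int.cast : ℤ → ℝ)).mulVec x) = l⁻¹ * al x := by
    intro x
    conv_lhs => rw [hdecomp x]
    rw [Matrix.mulVec_add, Matrix.mulVec_smul, Matrix.mulVec_smul, heigs, heigu,
      smul_smul, smul_smul, (hcoord _ _).1]
    ring
  have hbeA : ∀ x : Fin 2 → ℝ,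
      be ((A.map (Int.cast : ℤ → ℝ)).mulVec x) = l * be x := by
    intro x
    conv_lhs => rw [hdecomp x]
    rw [Matrix.mulVec_add, Matrix.mulVec_smul, Matrix.mulVec_smul, heigs, heigu,
      smul_smul, smul_smul, (hcoord _ _).2]
    ring
  set B : Matrix (Fin 2) (Fin 2) ℤ := A.adjugate with hB
  have hABn : ∀ n : Fin 2 → ℤ, A.mulVec (B.mulVec n) = n := by
    intro n
    rw [hB, Matrix.mulVec_mulVec, Matrix.mul_adjugate, hdet, one_smul, Matrix.one_mulVec]
  have halA' : ∀ n : Fin 2 → ℤ,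
      al (intCast2 (A.mulVec n)) = l⁻¹ * al (intCast2 n) := by
    intro n; rw [hcast, halA]
  have hbeB : ∀ n : Fin 2 → ℤ,
      be (intCast2 (B.mulVec n)) = l⁻¹ * be (intCast2 n) := by
    intro n
    have h1 : be (intCast2 n) = l * be (intCast2 (B.mulVec n)) := by
      conv_lhs => rw [← hABn n]
      rw [hcast, hbeA]
    rw [h1, ← mul_assoc, inv_mul_cancel₀ hl0, one_mul]
  -- nonvanishing of the coordinate maps on the lattice
  have halne : ∃ n : Fin 2 → ℤ, al (intCast2 n) ≠ 0 := by
    by_contra h; push_neg at h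
    have h1 := h ![1, 0]
    have h2 := h ![0, 1]
    simp only [hal, hiC] at h1 h2
    norm_num at h1 h2
    rcases h1 with h1 | h1
    · rcases h2 with h2 | h2
      · exact hvu (funext fun i => by fin_cases i <;> simp [h1, h2])
      · exact hDne h2
    · exact hDne h1
  have hbene : ∃ n : Fin 2 → ℤ, be (intCast2 n) ≠ 0 := by
    by_contra h; push_neg at h
    have h1 := h ![1, 0]
    have h2 := h ![0, 1]
    simp only [hbe, hiC] at h1 h2
    norm_num at h1 h2
    rcases h1 with h1 | h1
    · rcases h2 with h2 | h2
      · exact hvs (funext fun i => by fin_cases i <;> simp [h1, h2])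
      · exact hDne h2
    · exact hDne h1
  -- generic density of coordinate images of the lattice
  have key : ∀ (f : (Fin 2 → ℝ) → ℝ) (M : Matrix (Fin 2) (Fin 2) ℤ),
      (∀ (k : ℤ) (x : Fin 2 → ℝ), f (k • x) = k * f x) →
      (∀ n : Fin 2 → ℤ, f (intCast2 (M.mulVec n)) = l⁻¹ * f (intCast2 n)) →
      (∃ n : Fin 2 → ℤ, f (intCast2 n) ≠ 0) →
      ∀ (a ε : ℝ), 0 < ε → ∃ n : Fin 2 → ℤ, |f (intCast2 n) - a| < ε := by
    rintro f M hfz hfM ⟨n₀, hn₀⟩ a ε hε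
    have hiter : ∀ k : ℕ, ∃ n : Fin 2 → ℤ, f (intCast2 n) = (l⁻¹) ^ k * f (intCast2 n₀) := by
      intro k; induction k with
      | zero => exact ⟨n₀, by simp⟩
      | succ k ih =>
          obtain ⟨n, hn⟩ := ih
          exact ⟨M.mulVec n, by rw [hfM, hn, pow_succ]; ring⟩
    have hinv : |l⁻¹| < 1 := by
      rw [abs_inv]
      exact inv_lt_one_of_one_lt₀ hl
    obtain ⟨k, hk⟩ := exists_pow_lt_of_lt_one (div_pos hε (abs_pos.mpr hn₀)) hinv
    obtain ⟨m, hm⟩ := hiter k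
    obtain ⟨g, hgdef⟩ : ∃ g : ℝ, f (intCast2 m) = g := ⟨_, rfl⟩
    rw [hgdef] at hm
    have hg0 : g ≠ 0 := by
      rw [hm]; exact mul_ne_zero (pow_ne_zero _ (inv_ne_zero hl0)) hn₀
    have hgε : |g| < ε := by
      rw [hm, abs_mul, abs_pow]
      calc |l⁻¹| ^ k * |f (intCast2 n₀)|
          < ε / |f (intCast2 n₀)| * |f (intCast2 n₀)| :=
            mul_lt_mul_of_pos_right hk (abs_pos.mpr hn₀)
        _ = ε := div_mul_cancel₀ _ (ne_of_gt (abs_pos.mpr hn₀))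
    refine ⟨(⌊a / g⌋ : ℤ) • m, ?_⟩
    rw [map_zsmul, hfz, hgdef]
    have h1 : ((⌊a / g⌋ : ℤ) : ℝ) ≤ a / g := Int.floor_le _
    have h2 : a / g < (⌊a / g⌋ : ℤ) + 1 := Int.lt_floor_add_one _
    rcases hg0.lt_or_gt with hgneg | hgpos
    · have h1' : a ≤ (⌊a / g⌋ : ℝ) * g := by rwa [le_div_iff_of_neg hgneg] at h1
      have h2' : ((⌊a / g⌋ : ℝ) + 1) * g < a := by rwa [div_lt_iff_of_neg hgneg] at h2
      rw [add_mul, one_mul] at h2'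
      rw [abs_lt]
      have habs := abs_of_neg hgneg
      constructor <;> linarith
    · have h1' : (⌊a / g⌋ : ℝ) * g ≤ a := by rwa [le_div_iff₀ hgpos] at h1
      have h2' : a < ((⌊a / g⌋ : ℝ) + 1) * g := by rwa [div_lt_iff₀ hgpos] at h2
      rw [add_mul, one_mul] at h2'
      rw [abs_lt]
      have habs := abs_of_pos hgpos
      constructor <;> linarith
  have hdenseal := key al A (fun k x => (hzs k x).1) halA' halne
  have hdensebe := key be B (fun k x => (hzs k x).2) hbeB hbene
  -- lattice membership
  have hlatmem : ∀ n : Fin 2 → ℤ, intCast2 n ∈ lattice2 := fun n => ⟨n, rfl⟩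
  -- the homoclinic points
  have hmem : ∀ n m : Fin 2 → ℤ,
      z + torusProj (al (intCast2 n) • vs + be (intCast2 m) • vu) ∈
        ({w : Torus2 | ∃ s : ℝ, w = z + torusProj (s • vs)} ∩
         {w : Torus2 | ∃ s : ℝ, w = z + torusProj (s • vu)}) := by
    intro n m
    constructor
    · refine ⟨al (intCast2 n) - al (intCast2 m), ?_⟩
      congr 1
      refine QuotientAddGroup.eq.mpr ?_
      have heq : -(al (intCast2 n) • vs + be (intCast2 m) • vu) +
          (al (intCast2 n) - al (intCast2 m)) • vs = -(intCast2 m) := by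
        conv_rhs => rw [hdecomp (intCast2 m)]
        module
      rw [heq]
      exact neg_mem (hlatmem m)
    · refine ⟨be (intCast2 m) - be (intCast2 n), ?_⟩
      congr 1
      refine QuotientAddGroup.eq.mpr ?_
      have heq : -(al (intCast2 n) • vs + be (intCast2 m) • vu) +
          (be (intCast2 m) - be (intCast2 n)) • vu = -(intCast2 n) := by
        conv_rhs => rw [hdecomp (intCast2 n)]
        module
      rw [heq]
      exact neg_mem (hlatmem n)
  -- density
  refine fun w => ?_
  obtain ⟨x, hx⟩ := QuotientAddGroup.mk_surjective (w - z)
  have hw : w = z + torusProj x := by rw [show torusProj x = w - z from hx]; abel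
  rw [hw]
  set T : Set (Fin 2 → ℝ) :=
    {y | ∃ n m : Fin 2 → ℤ, y = al (intCast2 n) • vs + be (intCast2 m) • vu} with hT
  have hxT : x ∈ closure T := by
    rw [Metric.mem_closure_iff]
    intro ε hε
    set ε' := ε / (‖vs‖ + ‖vu‖ + 1) with hε'
    have hden : (0:ℝ) < ‖vs‖ + ‖vu‖ + 1 := by positivity
    have hε'pos : 0 < ε' := div_pos hε hden
    obtain ⟨n, hn⟩ := hdenseal (al x) ε' hε'pos
    obtain ⟨m, hm⟩ := hdensebe (be x) ε' hε'pos
    refine ⟨al (intCast2 n) • vs + be (intCast2 m) • vu, ⟨n, m, rfl⟩, ?_⟩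
    rw [dist_eq_norm]
    have hxy : x - (al (intCast2 n) • vs + be (intCast2 m) • vu) =
        (al x - al (intCast2 n)) • vs + (be x - be (intCast2 m)) • vu := by
      conv_lhs => rw [hdecomp x]
      module
    rw [hxy]
    have hnorm : ‖(al x - al (intCast2 n)) • vs + (be x - be (intCast2 m)) • vu‖ ≤
        |al x - al (intCast2 n)| * ‖vs‖ + |be x - be (intCast2 m)| * ‖vu‖ := by
      calc ‖(al x - al (intCast2 n)) • vs + (be x - be (intCast2 m)) • vu‖
          ≤ ‖(al x - al (intCast2 n)) • vs‖ + ‖(be x - be (intCast2 m)) • vu‖ :=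
            norm_add_le _ _
        _ = |al x - al (intCast2 n)| * ‖vs‖ + |be x - be (intCast2 m)| * ‖vu‖ := by
            rw [norm_smul, norm_smul, Real.norm_eq_abs, Real.norm_eq_abs]
    have h1 : |al x - al (intCast2 n)| ≤ ε' := by rw [abs_sub_comm]; exact le_of_lt hn
    have h2 : |be x - be (intCast2 m)| ≤ ε' := by rw [abs_sub_comm]; exact le_of_lt hm
    have hfin : ε' * ‖vs‖ + ε' * ‖vu‖ < ε := by
      have hmul : ε' * (‖vs‖ + ‖vu‖ + 1) = ε := div_mul_cancel₀ _ (ne_of_gt hden)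
      nlinarith [hε'pos]
    have := mul_le_mul_of_nonneg_right h1 (norm_nonneg vs)
    have := mul_le_mul_of_nonneg_right h2 (norm_nonneg vu)
    linarith [hnorm]
  have hcont : Continuous (fun y : Fin 2 → ℝ => z + torusProj y) :=
    (continuous_const.add continuous_id).comp continuous_quot_mk
  have himg := image_closure_subset_closure_image (s := T) hcont
  have hmemcl : z + torusProj x ∈ closure ((fun y : Fin 2 → ℝ => z + torusProj y) '' T) :=
    himg ⟨x, hxT, rfl⟩
  refine closure_mono ?_ hmemcl
  rintro u ⟨y, ⟨n, m, rfl⟩, rfl⟩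
  exact hmem n m
end
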